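/- Let Q be a 3×3 real transition rate matrix with stationary probability row vector μ, and let Π be a 3×K state-dependent probability matrix with columns φ_k and Λ_k = diag(φ_k). If two rows of Π are equal (as vectors), then the observed process is reversible: for every r ≥ 1, every sequence of observation symbols s_1, …, s_r and all times t_2, …, t_r ≥ 0, μ·Λ_{s_1}·exp(t_2 Q)·Λ_{s_2}·⋯·exp(t_r Q)·Λ_{s_r}·e = μ·Λ_{s_r}·exp(t_r Q)·Λ_{s_{r−1}}·⋯·exp(t_2 Q)·Λ_{s_1}·e. -/

import Mathlib

open Matrix

/-- The matrix product `Λ_{s₀} · exp(t₀Q) · Λ_{s₁} · ⋯ · exp(t_{r−1}Q) · Λ_{s_r}`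
appearing in the finite-dimensional distributions of the observed process of a
continuous-time hidden Markov model with transition rate matrix `Q` and
state-dependent probability matrix `E`. -/
noncomputable def obsProd (Q : Matrix (Fin 3) (Fin 3) ℝ) {K : ℕ}
    (E : Matrix (Fin 3) (Fin K) ℝ) {r : ℕ} (s : Fin (r + 1) → Fin K)
    (t : Fin r → ℝ) : Matrix (Fin 3) (Fin 3) ℝ :=
  Matrix.diagonal (fun a => E a (s 0)) *
    (List.ofFn fun i : Fin r =>
      NormedSpace.exp (t i • Q) * Matrix.diagonal fun a => E a (s i.succ)).prod

namespace ObsRev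

lemma exp_mulVec_eq (A : Matrix (Fin 3) (Fin 3) ℝ) (w : Fin 3 → ℝ) (h : A *ᵥ w = 0) :
    NormedSpace.exp A *ᵥ w = w := by
  letI : SeminormedRing (Matrix (Fin 3) (Fin 3) ℝ) := Matrix.linftyOpSemiNormedRing
  letI : NormedRing (Matrix (Fin 3) (Fin 3) ℝ) := Matrix.linftyOpNormedRing
  letI : NormedAlgebra ℝ (Matrix (Fin 3) (Fin 3) ℝ) := Matrix.linftyOpNormedAlgebra
  let L : Matrix (Fin 3) (Fin 3) ℝ →ₗ[ℝ] (Fin 3 → ℝ) :=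
    { toFun := fun X => X *ᵥ w
      map_add' := fun X Y => Matrix.add_mulVec X Y w
      map_smul' := fun c X => Matrix.smul_mulVec c X w }
  have hsum : Summable (fun n : ℕ => ((Nat.factorial n : ℝ))⁻¹ • A ^ n) :=
    NormedSpace.expSeries_summable' (𝕂 := ℝ) A
  have hmap := (hsum.hasSum.map L.toContinuousLinearMap L.toContinuousLinearMap.continuous).tsum_eq
  rw [NormedSpace.exp_eq_tsum (𝕂 := ℝ)]
  have h2 : (fun X => X *ᵥ w) (∑' n : ℕ, ((Nat.factorial n : ℝ))⁻¹ • A ^ n)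
      = ∑' n : ℕ, ((Nat.factorial n : ℝ))⁻¹ • (A ^ n *ᵥ w) := by
    rw [show (fun X => X *ᵥ w) = ⇑L.toContinuousLinearMap from rfl, ← hmap]
    congr 1
    funext n
    simp [L, Matrix.smul_mulVec]
  simp only at h2
  rw [h2, tsum_eq_single 0]
  · simp
  · intro n hn
    cases n with
    | zero => exact absurd rfl hn
    | succ k =>
      rw [pow_succ, ← Matrix.mulVec_mulVec, h, Matrix.mulVec_zero, smul_zero]

lemma exp_vecMul_eq (A : Matrix (Fin 3) (Fin 3) ℝ) (v : Fin 3 → ℝ) (h : v ᵥ* A = 0) :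
    v ᵥ* NormedSpace.exp A = v := by
  have h' : Aᵀ *ᵥ v = 0 := by rw [Matrix.mulVec_transpose, h]
  have := exp_mulVec_eq Aᵀ v h'
  rw [Matrix.exp_transpose, Matrix.mulVec_transpose] at this
  exact this

variable {K : ℕ}

noncomputable def Ex (Q : Matrix (Fin 3) (Fin 3) ℝ) (t : ℝ) : Matrix (Fin 3) (Fin 3) ℝ :=
  NormedSpace.exp (t • Q)

noncomputable def Lam (E : Matrix (Fin 3) (Fin K) ℝ) (k : Fin K) : Matrix (Fin 3) (Fin 3) ℝ :=
  Matrix.diagonal fun a => E a k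

noncomputable def Mp (Q : Matrix (Fin 3) (Fin 3) ℝ) (E : Matrix (Fin 3) (Fin K) ℝ) :
    Fin K → List (ℝ × Fin K) → Matrix (Fin 3) (Fin 3) ℝ
  | k, [] => Lam E k
  | k, (t, k') :: l => Lam E k * Ex Q t * Mp Q E k' l

def one3 : Fin 3 → ℝ := fun _ => 1

def em (m : Fin 3) : Fin 3 → ℝ := Pi.single m 1

def revP : Fin K → List (ℝ × Fin K) → Fin K × List (ℝ × Fin K)
  | k, [] => (k, [])
  | k, (t, k') :: l => ((revP k' l).1, (revP k' l).2 ++ [(t, k)])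

structure Ctx (Q : Matrix (Fin 3) (Fin 3) ℝ) (E : Matrix (Fin 3) (Fin K) ℝ)
    (μ : Fin 3 → ℝ) (m : Fin 3) (c d : Fin K → ℝ) : Prop where
  hμE : ∀ t, μ ᵥ* Ex Q t = μ
  hone : ∀ t, Ex Q t *ᵥ one3 = one3
  hmerge : ∀ t t', Ex Q t * Ex Q t' = Ex Q (t + t')
  hLrow : ∀ (v : Fin 3 → ℝ) k, v ᵥ* Lam E k = c k • v + (d k * v m) • em m
  hLcol : ∀ (w : Fin 3 → ℝ) k, Lam E k *ᵥ w = c k • w + (d k * w m) • em m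
  hμ1 : μ ⬝ᵥ one3 = 1

section Scalars

variable (Q : Matrix (Fin 3) (Fin 3) ℝ) (E : Matrix (Fin 3) (Fin K) ℝ)
  (μ : Fin 3 → ℝ) (m : Fin 3)

noncomputable def SA (k : Fin K) (l : List (ℝ × Fin K)) : ℝ :=
  μ ᵥ* Mp Q E k l ⬝ᵥ one3

noncomputable def SB (t : ℝ) (k : Fin K) (l : List (ℝ × Fin K)) : ℝ :=
  em m ᵥ* (Ex Q t * Mp Q E k l) ⬝ᵥ one3

noncomputable def SC (k : Fin K) (l : List (ℝ × Fin K)) (t : ℝ) : ℝ :=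
  μ ᵥ* (Mp Q E k l * Ex Q t) ⬝ᵥ em m

noncomputable def SD (t : ℝ) (k : Fin K) (l : List (ℝ × Fin K)) (t' : ℝ) : ℝ :=
  em m ᵥ* (Ex Q t * (Mp Q E k l * Ex Q t')) ⬝ᵥ em m

lemma Mp_snoc (k k' : Fin K) (τ : ℝ) :
    ∀ l, Mp Q E k (l ++ [(τ, k')]) = Mp Q E k l * Ex Q τ * Lam E k'
  | [] => rfl
  | (t, a) :: l => by
    show Lam E k * Ex Q t * Mp Q E a (l ++ [(τ, k')]) = _
    rw [Mp_snoc a k' τ l]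
    show _ = Lam E k * Ex Q t * Mp Q E a l * Ex Q τ * Lam E k'
    simp only [mul_assoc]

lemma SA_eq (k : Fin K) (l : List (ℝ × Fin K)) :
    SA Q E μ k l = μ ⬝ᵥ (Mp Q E k l *ᵥ one3) := by
  rw [Matrix.dotProduct_mulVec]; rfl

lemma SB_eq (t : ℝ) (k : Fin K) (l : List (ℝ × Fin K)) :
    SB Q E m t k l = (em m ᵥ* Ex Q t) ᵥ* Mp Q E k l ⬝ᵥ one3 := by
  rw [Matrix.vecMul_vecMul]; rfl

lemma SC_eq (k : Fin K) (l : List (ℝ × Fin K)) (t : ℝ) :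
    SC Q E μ m k l t = μ ⬝ᵥ (Mp Q E k l *ᵥ (Ex Q t *ᵥ em m)) := by
  rw [Matrix.mulVec_mulVec, Matrix.dotProduct_mulVec]; rfl

lemma SD_eq (t : ℝ) (k : Fin K) (l : List (ℝ × Fin K)) (t' : ℝ) :
    SD Q E m t k l t' = (em m ᵥ* Ex Q t) ⬝ᵥ (Mp Q E k l *ᵥ (Ex Q t' *ᵥ em m)) := by
  rw [Matrix.mulVec_mulVec, Matrix.dotProduct_mulVec, Matrix.vecMul_vecMul]; rfl

end Scalars

section Lemmas

variable {Q : Matrix (Fin 3) (Fin 3) ℝ} {E : Matrix (Fin 3) (Fin K) ℝ}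
  {μ : Fin 3 → ℝ} {m : Fin 3} {c d : Fin K → ℝ} (h : Ctx Q E μ m c d)

lemma em_vecMul (M : Matrix (Fin 3) (Fin 3) ℝ) : em m ᵥ* M = M m :=
  Matrix.single_one_vecMul m M

lemma dot_em (v : Fin 3 → ℝ) : v ⬝ᵥ em m = v m := by simp [em]

lemma em_dot (v : Fin 3 → ℝ) : em m ⬝ᵥ v = v m := by simp [em]

lemma em_vecMul_apply (M : Matrix (Fin 3) (Fin 3) ℝ) : (em m ᵥ* M) m = M m m := by
  simp [em]

lemma Ex_mulVec_em (Q : Matrix (Fin 3) (Fin 3) ℝ) (t : ℝ) : (Ex Q t *ᵥ em m) m = Ex Q t m m := by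
  simp [em]

lemma Ex_merge_mulVec (h : Ctx Q E μ m c d) (τ t : ℝ) (w : Fin 3 → ℝ) :
    Ex Q τ *ᵥ (Ex Q t *ᵥ w) = Ex Q (τ + t) *ᵥ w := by
  rw [Matrix.mulVec_mulVec, h.hmerge]

include h

lemma em_Ex_one (t : ℝ) : em m ᵥ* Ex Q t ⬝ᵥ one3 = 1 := by
  rw [← Matrix.dotProduct_mulVec, h.hone, em_dot]
  simp [one3]

lemma SA_cons (k k' : Fin K) (t : ℝ) (l : List (ℝ × Fin K)) :
    SA Q E μ k ((t, k') :: l) = c k * SA Q E μ k' l + (d k * μ m) * SB Q E m t k' l := by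
  show μ ᵥ* (Lam E k * Ex Q t * Mp Q E k' l) ⬝ᵥ one3 = _
  rw [← Matrix.vecMul_vecMul, ← Matrix.vecMul_vecMul, h.hLrow μ k,
    Matrix.add_vecMul, Matrix.smul_vecMul, Matrix.smul_vecMul, h.hμE t,
    Matrix.add_vecMul, Matrix.smul_vecMul, Matrix.smul_vecMul,
    add_dotProduct, smul_dotProduct, smul_dotProduct]
  rw [show SB Q E m t k' l = (em m ᵥ* Ex Q t) ᵥ* Mp Q E k' l ⬝ᵥ one3 by
    rw [Matrix.vecMul_vecMul]; rfl]
  rfl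

lemma SB_cons (t τ : ℝ) (k k' : Fin K) (l : List (ℝ × Fin K)) :
    SB Q E m t k ((τ, k') :: l)
      = c k * SB Q E m (t + τ) k' l + (d k * Ex Q t m m) * SB Q E m τ k' l := by
  show em m ᵥ* (Ex Q t * (Lam E k * Ex Q τ * Mp Q E k' l)) ⬝ᵥ one3 = _
  rw [← Matrix.vecMul_vecMul, ← Matrix.vecMul_vecMul, ← Matrix.vecMul_vecMul,
    h.hLrow (em m ᵥ* Ex Q t) k, em_vecMul,
    Matrix.add_vecMul, Matrix.smul_vecMul, Matrix.smul_vecMul,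
    Matrix.add_vecMul, Matrix.smul_vecMul, Matrix.smul_vecMul,
    add_dotProduct, smul_dotProduct, smul_dotProduct]
  rw [show (Ex Q t m) ᵥ* Ex Q τ = em m ᵥ* (Ex Q t * Ex Q τ) by
      rw [← em_vecMul (Ex Q t), Matrix.vecMul_vecMul],
    h.hmerge t τ]
  rw [show SB Q E m (t + τ) k' l = (em m ᵥ* Ex Q (t + τ)) ᵥ* Mp Q E k' l ⬝ᵥ one3 by
    rw [Matrix.vecMul_vecMul]; rfl]
  rw [show SB Q E m τ k' l = (em m ᵥ* Ex Q τ) ᵥ* Mp Q E k' l ⬝ᵥ one3 by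
    rw [Matrix.vecMul_vecMul]; rfl]
  rfl

lemma SC_cons (k k' : Fin K) (τ : ℝ) (l : List (ℝ × Fin K)) (t : ℝ) :
    SC Q E μ m k ((τ, k') :: l) t
      = c k * SC Q E μ m k' l t + (d k * μ m) * SD Q E m τ k' l t := by
  rw [SC_eq, SC_eq, SD_eq]
  show μ ⬝ᵥ ((Lam E k * Ex Q τ * Mp Q E k' l) *ᵥ _) = _
  rw [← Matrix.mulVec_mulVec, ← Matrix.mulVec_mulVec, Matrix.dotProduct_mulVec,
    h.hLrow μ k, add_dotProduct, smul_dotProduct, smul_dotProduct,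
    Matrix.dotProduct_mulVec μ (Ex Q τ), h.hμE τ, Matrix.dotProduct_mulVec (em m) (Ex Q τ)]
  simp [smul_eq_mul]

lemma SC_snoc (k k' : Fin K) (τ : ℝ) (l : List (ℝ × Fin K)) (t : ℝ) :
    SC Q E μ m k (l ++ [(τ, k')]) t
      = c k' * SC Q E μ m k l (τ + t) + (d k' * Ex Q t m m) * SC Q E μ m k l τ := by
  rw [SC_eq, SC_eq, SC_eq, Mp_snoc]
  rw [← Matrix.mulVec_mulVec, ← Matrix.mulVec_mulVec, h.hLcol (Ex Q t *ᵥ em m) k',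
    Ex_mulVec_em, Matrix.mulVec_add, Matrix.mulVec_smul, Matrix.mulVec_smul,
    Ex_merge_mulVec h, Matrix.mulVec_add, Matrix.mulVec_smul, Matrix.mulVec_smul,
    dotProduct_add, dotProduct_smul, dotProduct_smul]
  simp [mul_assoc]

lemma SD_cons (t τ : ℝ) (k k' : Fin K) (l : List (ℝ × Fin K)) (t' : ℝ) :
    SD Q E m t k ((τ, k') :: l) t'
      = c k * SD Q E m (t + τ) k' l t' + (d k * Ex Q t m m) * SD Q E m τ k' l t' := by
  rw [SD_eq, SD_eq, SD_eq]
  show (em m ᵥ* Ex Q t) ⬝ᵥ ((Lam E k * Ex Q τ * Mp Q E k' l) *ᵥ _) = _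
  rw [← Matrix.mulVec_mulVec, ← Matrix.mulVec_mulVec, Matrix.dotProduct_mulVec,
    h.hLrow (em m ᵥ* Ex Q t) k, em_vecMul_apply,
    add_dotProduct, smul_dotProduct, smul_dotProduct,
    Matrix.dotProduct_mulVec (em m ᵥ* Ex Q t) (Ex Q τ), Matrix.vecMul_vecMul,
    h.hmerge t τ, Matrix.dotProduct_mulVec (em m) (Ex Q τ)]
  simp [smul_eq_mul]

lemma SD_snoc (t : ℝ) (k k' : Fin K) (τ : ℝ) (l : List (ℝ × Fin K)) (t' : ℝ) :
    SD Q E m t k (l ++ [(τ, k')]) t'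
      = c k' * SD Q E m t k l (τ + t') + (d k' * Ex Q t' m m) * SD Q E m t k l τ := by
  rw [SD_eq, SD_eq, SD_eq, Mp_snoc]
  rw [← Matrix.mulVec_mulVec, ← Matrix.mulVec_mulVec, h.hLcol (Ex Q t' *ᵥ em m) k',
    Ex_mulVec_em, Matrix.mulVec_add, Matrix.mulVec_smul, Matrix.mulVec_smul,
    Ex_merge_mulVec h, Matrix.mulVec_add, Matrix.mulVec_smul, Matrix.mulVec_smul,
    dotProduct_add, dotProduct_smul, dotProduct_smul]
  simp [mul_assoc]

lemma SA_snoc (k k' : Fin K) (t : ℝ) (l : List (ℝ × Fin K)) :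
    SA Q E μ k (l ++ [(t, k')]) = c k' * SA Q E μ k l + d k' * SC Q E μ m k l t := by
  rw [SA_eq, SA_eq, SC_eq, Mp_snoc]
  rw [← Matrix.mulVec_mulVec, ← Matrix.mulVec_mulVec, h.hLcol one3 k']
  have h1 : one3 m = 1 := rfl
  rw [h1, mul_one, Matrix.mulVec_add, Matrix.mulVec_smul, Matrix.mulVec_smul, h.hone,
    Matrix.mulVec_add, Matrix.mulVec_smul, Matrix.mulVec_smul,
    dotProduct_add, dotProduct_smul, dotProduct_smul]
  simp [smul_eq_mul]

-- base cases
lemma SA_nil (k : Fin K) : SA Q E μ k [] = c k + d k * μ m := by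
  show μ ᵥ* Lam E k ⬝ᵥ one3 = _
  rw [h.hLrow μ k, add_dotProduct, smul_dotProduct, smul_dotProduct,
    h.hμ1, em_dot]
  simp [one3]

lemma SB_nil (t : ℝ) (k : Fin K) : SB Q E m t k [] = c k + d k * Ex Q t m m := by
  rw [SB_eq]
  show (em m ᵥ* Ex Q t) ᵥ* Lam E k ⬝ᵥ one3 = _
  rw [h.hLrow (em m ᵥ* Ex Q t) k, em_vecMul_apply,
    add_dotProduct, smul_dotProduct, smul_dotProduct,
    em_Ex_one h, em_dot]
  simp [one3]

lemma SC_nil (k : Fin K) (t : ℝ) :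
    SC Q E μ m k [] t = c k * μ m + (d k * Ex Q t m m) * μ m := by
  rw [SC_eq]
  show μ ⬝ᵥ (Lam E k *ᵥ (Ex Q t *ᵥ em m)) = _
  rw [h.hLcol (Ex Q t *ᵥ em m) k, Ex_mulVec_em, dotProduct_add, dotProduct_smul,
    dotProduct_smul, Matrix.dotProduct_mulVec μ (Ex Q t), h.hμE t, dot_em]
  simp

lemma SD_nil (t : ℝ) (k : Fin K) (t' : ℝ) :
    SD Q E m t k [] t' = c k * Ex Q (t + t') m m + (d k * Ex Q t' m m) * Ex Q t m m := by
  rw [SD_eq]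
  show (em m ᵥ* Ex Q t) ⬝ᵥ (Lam E k *ᵥ (Ex Q t' *ᵥ em m)) = _
  rw [h.hLcol (Ex Q t' *ᵥ em m) k, Ex_mulVec_em, dotProduct_add, dotProduct_smul,
    dotProduct_smul, Matrix.dotProduct_mulVec (em m ᵥ* Ex Q t) (Ex Q t'),
    Matrix.vecMul_vecMul, h.hmerge t t']
  rw [dot_em (em m ᵥ* Ex Q (t + t')), dot_em (em m ᵥ* Ex Q t), em_vecMul_apply, em_vecMul_apply]
  simp

-- the three reversal lemmas
lemma LD : ∀ (l : List (ℝ × Fin K)) (k : Fin K) (t t' : ℝ),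
    SD Q E m t k l t' = SD Q E m t' (revP k l).1 (revP k l).2 t
  | [], k, t, t' => by
    show SD Q E m t k [] t' = SD Q E m t' k [] t
    rw [SD_nil h, SD_nil h, add_comm t t']
    ring
  | (τ, k') :: l, k, t, t' => by
    rw [SD_cons h, LD l k' (t + τ) t', LD l k' τ t']
    show _ = SD Q E m t' (revP k' l).1 ((revP k' l).2 ++ [(τ, k)]) t
    rw [SD_snoc h, add_comm τ t]

lemma LC : ∀ (l : List (ℝ × Fin K)) (k : Fin K) (t : ℝ),
    μ m * SB Q E m t k l = SC Q E μ m (revP k l).1 (revP k l).2 t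
  | [], k, t => by
    show μ m * SB Q E m t k [] = SC Q E μ m k [] t
    rw [SB_nil h, SC_nil h]
    ring
  | (τ, k') :: l, k, t => by
    rw [SB_cons h]
    show _ = SC Q E μ m (revP k' l).1 ((revP k' l).2 ++ [(τ, k)]) t
    rw [SC_snoc h, add_comm τ t, ← LC l k' (t + τ), ← LC l k' τ]
    ring

lemma LA : ∀ (l : List (ℝ × Fin K)) (k : Fin K),
    SA Q E μ k l = SA Q E μ (revP k l).1 (revP k l).2
  | [], k => rfl
  | (t, k') :: l, k => by
    rw [SA_cons h, LA l k']
    show _ = SA Q E μ (revP k' l).1 ((revP k' l).2 ++ [(t, k)])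
    rw [SA_snoc h, ← LC h l k' t]
    ring

end Lemmas

-- bridge to obsProd
lemma Mp_eq_prod (Q : Matrix (Fin 3) (Fin 3) ℝ) (E : Matrix (Fin 3) (Fin K) ℝ) :
    ∀ (l : List (ℝ × Fin K)) (k : Fin K),
      Mp Q E k l = Lam E k * (l.map fun p => Ex Q p.1 * Lam E p.2).prod
  | [], k => by simp [Mp]
  | (t, k') :: l, k => by
    show Lam E k * Ex Q t * Mp Q E k' l = _
    rw [Mp_eq_prod Q E l k']
    simp [mul_assoc]

lemma obsProd_eq (Q : Matrix (Fin 3) (Fin 3) ℝ) (E : Matrix (Fin 3) (Fin K) ℝ)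
    {r : ℕ} (s : Fin (r + 1) → Fin K) (t : Fin r → ℝ) :
    obsProd Q E s t = Mp Q E (s 0) (List.ofFn fun i => (t i, s i.succ)) := by
  rw [Mp_eq_prod, List.map_ofFn]
  rfl

lemma revP_ofFn : ∀ (r : ℕ) (s : Fin (r + 1) → Fin K) (t : Fin r → ℝ),
    revP (s 0) (List.ofFn fun i => (t i, s i.succ))
      = (s (Fin.last r), List.ofFn fun i : Fin r => (t i.rev, s i.rev.castSucc))
  | 0, s, t => by simp [revP]
  | r + 1, s, t => by
    have ih := revP_ofFn r (fun i => s i.succ) (fun i => t i.succ)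
    rw [List.ofFn_succ]
    show (( revP (s (Fin.succ 0)) (List.ofFn fun i : Fin r => (t i.succ, s i.succ.succ))).1,
      (revP (s (Fin.succ 0)) (List.ofFn fun i : Fin r => (t i.succ, s i.succ.succ))).2
        ++ [(t 0, s 0)]) = _
    rw [show (Fin.succ 0 : Fin (r + 2)) = 1 from rfl] at *
    rw [ih]
    refine Prod.ext ?_ ?_
    · show s (Fin.last r).succ = s (Fin.last (r + 1))
      rw [Fin.succ_last]
    · show (List.ofFn fun i : Fin r => (t i.rev.succ, s i.rev.castSucc.succ)) ++ [(t 0, s 0)]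
        = List.ofFn fun i : Fin (r + 1) => (t i.rev, s i.rev.castSucc)
      rw [List.ofFn_succ' (fun i : Fin (r + 1) => (t i.rev, s i.rev.castSucc))]
      rw [List.concat_eq_append]
      congr 1
      · congr 1
        funext i
        rw [Fin.rev_castSucc, Fin.succ_castSucc]
      · rw [Fin.rev_last]
        rfl

end ObsRev

/-- If two rows of the state-dependent probability matrix are equal,
then the observed process of the continuous-time three-state hidden Markov model is
reversible. -/
theorem observed_reversible_of_two_rows_eq
    (Q : Matrix (Fin 3) (Fin 3) ℝ) (μ : Fin 3 → ℝ)
    {K : ℕ} (E : Matrix (Fin 3) (Fin K) ℝ)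
    (hoff : ∀ i j : Fin 3, i ≠ j → 0 ≤ Q i j)
    (hrow : ∀ i : Fin 3, ∑ j, Q i j = 0)
    (hpos : ∀ i, 0 < μ i) (hsum : μ 0 + μ 1 + μ 2 = 1)
    (hstat : μ ᵥ* Q = 0)
    (hE0 : ∀ a k, 0 ≤ E a k) (hE1 : ∀ a : Fin 3, ∑ k, E a k = 1)
    (hsing : ∃ i j : Fin 3, i ≠ j ∧ (fun k => E i k) = (fun k => E j k)) :
    ∀ (r : ℕ) (s : Fin (r + 1) → Fin K) (t : Fin r → ℝ), (∀ i, 0 ≤ t i) →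
      (μ ᵥ* obsProd Q E s t) ⬝ᵥ (fun _ => (1 : ℝ)) =
        (μ ᵥ* obsProd Q E (s ∘ Fin.rev) (t ∘ Fin.rev)) ⬝ᵥ (fun _ => (1 : ℝ)) := by
  classical
  obtain ⟨i, j, hij, hrows⟩ := hsing
  have hEij : ∀ k, E i k = E j k := fun k => congrFun hrows k
  have hmex : ∀ (i j : Fin 3), i ≠ j → ∃ m : Fin 3, ∀ a : Fin 3, a ≠ m → a = i ∨ a = j := by
    decide
  obtain ⟨m, hm⟩ := hmex i j hij
  set c : Fin K → ℝ := fun k => E i k with hc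
  set d : Fin K → ℝ := fun k => E m k - E i k with hd
  have hEc : ∀ (a : Fin 3) k, a ≠ m → E a k = c k := by
    intro a k ha
    rcases hm a ha with h | h
    · rw [h]
    · rw [h, ← hEij]
  have hQone : Q *ᵥ ObsRev.one3 = 0 := by
    funext a
    have := hrow a
    simp only [Matrix.mulVec, dotProduct, ObsRev.one3, mul_one]
    simpa using this
  have hctx : ObsRev.Ctx Q E μ m c d := by
    constructor
    · intro t
      apply ObsRev.exp_vecMul_eq
      have : (t • Q)ᵀ *ᵥ μ = 0 := by
        rw [Matrix.transpose_smul, Matrix.smul_mulVec, Matrix.mulVec_transpose, hstat,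
          smul_zero]
      rw [← Matrix.mulVec_transpose, this]
    · intro t
      apply ObsRev.exp_mulVec_eq
      rw [Matrix.smul_mulVec, hQone, smul_zero]
    · intro t t'
      show NormedSpace.exp (t • Q) * NormedSpace.exp (t' • Q) = NormedSpace.exp ((t + t') • Q)
      rw [add_smul, Matrix.exp_add_of_commute (t • Q) (t' • Q)
        (((Commute.refl Q).smul_left t).smul_right t')]
    · intro v k
      funext x
      simp only [ObsRev.Lam]
      rw [Matrix.vecMul_diagonal]
      by_cases hx : x = m
      · subst hx
        have : E x k = c k + d k := by rw [hc, hd]; ring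
        simp [this, ObsRev.em, Pi.single_apply]
        try ring
      · rw [hEc x k hx]
        simp [ObsRev.em, Pi.single_apply, hx]
        try ring
    · intro w k
      funext x
      simp only [ObsRev.Lam]
      rw [Matrix.mulVec_diagonal]
      by_cases hx : x = m
      · subst hx
        have : E x k = c k + d k := by rw [hc, hd]; ring
        simp [this, ObsRev.em, Pi.single_apply]
        try ring
      · rw [hEc x k hx]
        simp [ObsRev.em, Pi.single_apply, hx]
        try ring
    · show μ ⬝ᵥ ObsRev.one3 = 1
      simp only [dotProduct, ObsRev.one3, mul_one]
      rw [Fin.sum_univ_three]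
      exact hsum
  intro r s t ht
  have hL : (μ ᵥ* obsProd Q E s t) ⬝ᵥ (fun _ => (1 : ℝ))
      = ObsRev.SA Q E μ (s 0) (List.ofFn fun i => (t i, s i.succ)) := by
    rw [ObsRev.obsProd_eq]; rfl
  have hR : (μ ᵥ* obsProd Q E (s ∘ Fin.rev) (t ∘ Fin.rev)) ⬝ᵥ (fun _ => (1 : ℝ))
      = ObsRev.SA Q E μ (s (Fin.last r)) (List.ofFn fun i : Fin r => (t i.rev, s i.rev.castSucc)) := by
    rw [ObsRev.obsProd_eq]
    have h0 : (s ∘ Fin.rev) 0 = s (Fin.last r) := by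
      simp [Function.comp, Fin.rev_zero]
    have hl : (List.ofFn fun i : Fin r => ((t ∘ Fin.rev) i, (s ∘ Fin.rev) i.succ))
        = List.ofFn fun i : Fin r => (t i.rev, s i.rev.castSucc) := by
      congr 1
      funext i
      simp only [Function.comp]
      congr 2
      rw [Fin.rev_succ]
    rw [h0, hl]
    rfl
  rw [hL, hR, ObsRev.LA hctx, ObsRev.revP_ofFn]
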